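/- (Remark 2.6 for g) Define, for ℓ > 0, x > 0, and n ∈ ℕ, g_{n,ℓ}(x) := (x/2)·((√(1 + (ℓ/(2x))²) + ℓ/(2x))^{2n} + (√(1 + (ℓ/(2x))²) − ℓ/(2x))^{2n}). Then for every x > 0 and every t ≥ 0, lim_{m→∞} g_{⌊tm⌋, 1/m}(x) = x·cosh(t/x); in particular, lim_{m→∞} g_{m, 1/m}(x) = x·cosh(1/x). -/

import Mathlib

open Filter

/-- `g ℓ n x = (x/2)·((√(1+(ℓ/2x)²) + ℓ/2x)^(2n) + (√(1+(ℓ/2x)²) − ℓ/2x)^(2n))`. -/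
noncomputable def catenoidG (ℓ : ℝ) (n : ℕ) (x : ℝ) : ℝ :=
  (x/2) * ((Real.sqrt (1 + (ℓ/(2*x))^2) + ℓ/(2*x))^(2*n)
            + (Real.sqrt (1 + (ℓ/(2*x))^2) - ℓ/(2*x))^(2*n))

lemma catenoidG_eq_cosh (ℓ x : ℝ) (n : ℕ) :
    catenoidG ℓ n x = x * Real.cosh ((2*n : ℝ) * Real.arsinh (ℓ/(2*x))) := by
  rw [catenoidG]
  set s := ℓ/(2*x)
  have h1 : Real.sqrt (1 + s^2) + s = Real.exp (Real.arsinh s) := by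
    rw [Real.exp_arsinh]; ring
  have h2 : Real.sqrt (1 + s^2) - s = Real.exp (-Real.arsinh s) := by
    rw [← Real.arsinh_neg, Real.exp_arsinh, neg_sq]; ring
  rw [h1, h2, ← Real.exp_nat_mul, ← Real.exp_nat_mul, Real.cosh_eq]
  push_cast
  ring_nf

lemma arsinh_ratio_lim :
    Tendsto (fun y : ℝ => Real.arsinh y / y) (nhdsWithin 0 {0}ᶜ) (nhds 1) := by
  have h := (Real.hasStrictDerivAt_arsinh 0).hasDerivAt
  simp only [ne_eq, OfNat.ofNat_ne_zero, not_false_eq_true, zero_pow, add_zero, Real.sqrt_one,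
    inv_one] at h
  have := hasDerivAt_iff_tendsto_slope.mp h
  refine this.congr fun y => ?_
  simp [slope_def_field, Real.arsinh_zero, div_eq_inv_mul]

lemma catenoid_arg_lim (x t : ℝ) (hx : 0 < x) (ht : 0 ≤ t) :
    Tendsto (fun m : ℕ => 2*(⌊t*(m:ℝ)⌋₊:ℝ) * Real.arsinh ((1/(m:ℝ))/(2*x))) atTop
      (nhds (t/x)) := by
  have hs : Tendsto (fun m : ℕ => (1/(m:ℝ))/(2*x)) atTop (nhdsWithin 0 {0}ᶜ) := by
    rw [tendsto_nhdsWithin_iff]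
    constructor
    · have := tendsto_const_div_atTop_nhds_zero_nat (1/(2*x))
      refine this.congr fun m => by field_simp
    · filter_upwards [eventually_ge_atTop 1] with m hm
      have hm' : (0:ℝ) < m := by exact_mod_cast hm
      simp only [Set.mem_compl_iff, Set.mem_singleton_iff]
      positivity
  have hfl : Tendsto (fun m : ℕ => (⌊t*(m:ℝ)⌋₊ : ℝ) / m) atTop (nhds t) :=
    (tendsto_nat_floor_mul_div_atTop ht).comp tendsto_natCast_atTop_atTop
  have hr : Tendsto (fun m : ℕ => Real.arsinh ((1/(m:ℝ))/(2*x)) / ((1/(m:ℝ))/(2*x)))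
      atTop (nhds 1) := arsinh_ratio_lim.comp hs
  have hmain : Tendsto (fun m : ℕ => ((⌊t*(m:ℝ)⌋₊ : ℝ) / m * x⁻¹) *
      (Real.arsinh ((1/(m:ℝ))/(2*x)) / ((1/(m:ℝ))/(2*x)))) atTop (nhds (t * x⁻¹ * 1)) :=
    ((hfl.mul tendsto_const_nhds).mul hr)
  rw [mul_one, ← div_eq_mul_inv] at hmain
  refine hmain.congr' ?_
  filter_upwards [eventually_ge_atTop 1] with m hm
  have hm' : (0:ℝ) < m := by exact_mod_cast hm
  have hsne : ((1/(m:ℝ))/(2*x)) ≠ 0 := by positivity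
  field_simp

theorem stmt_19 (x : ℝ) (hx : 0 < x) :
    (∀ t : ℝ, 0 ≤ t →
      Tendsto (fun m : ℕ => catenoidG (1/(m:ℝ)) ⌊t*(m:ℝ)⌋₊ x) atTop
        (nhds (x * Real.cosh (t/x)))) ∧
    Tendsto (fun m : ℕ => catenoidG (1/(m:ℝ)) m x) atTop
      (nhds (x * Real.cosh (1/x))) := by
  have main : ∀ t : ℝ, 0 ≤ t →
      Tendsto (fun m : ℕ => catenoidG (1/(m:ℝ)) ⌊t*(m:ℝ)⌋₊ x) atTop
        (nhds (x * Real.cosh (t/x))) := by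
    intro t ht
    have harg := catenoid_arg_lim x t hx ht
    have := ((Real.continuous_cosh.tendsto _).comp harg).const_mul x
    refine this.congr fun m => ?_
    rw [catenoidG_eq_cosh]
    simp [Function.comp]
  refine ⟨main, ?_⟩
  have := main 1 zero_le_one
  refine this.congr fun m => ?_
  simp
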